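/- Let a, b, c ∈ ℝ with b > 0 and 16 |a| |c| ≤ b². Then there exists a unique t ∈ ℝ satisfying both a − b t = c t² and |c t| ≤ b/4. Moreover, this t satisfies |t − a/b| ≤ 16 |c| a² / b³. -/

import Mathlib

/-- Localization of the small root of the quadratic equation `a − b t = c t²`
used in the Lyapunov–Schmidt reduction: under `b > 0` and `16 |a| |c| ≤ b²`, there is
a unique root `t` with `|c t| ≤ b/4`, and it satisfies `|t − a/b| ≤ 16 |c| a² / b³`. -/
theorem quadratic_small_root (a b c : ℝ) (hb : 0 < b) (h : 16 * |a| * |c| ≤ b ^ 2) :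
    ∃ t : ℝ, (a - b * t = c * t ^ 2 ∧ |c * t| ≤ b / 4) ∧
      |t - a / b| ≤ 16 * |c| * a ^ 2 / b ^ 3 ∧
      ∀ t' : ℝ, (a - b * t' = c * t' ^ 2 ∧ |c * t'| ≤ b / 4) → t' = t := by
  have hac : |a * c| ≤ b ^ 2 / 16 := by
    rw [abs_mul]; nlinarith [abs_nonneg a, abs_nonneg c]
  have hac' := abs_le.1 hac
  have hD : (0:ℝ) ≤ b ^ 2 + 4 * (a * c) := by nlinarith
  set s := Real.sqrt (b ^ 2 + 4 * (a * c)) with hs_def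
  have hs0 : 0 ≤ s := Real.sqrt_nonneg _
  have hs2 : s ^ 2 = b ^ 2 + 4 * (a * c) := Real.sq_sqrt hD
  have hbs : 0 < b + s := by linarith
  set t := 2 * a / (b + s) with ht_def
  have hroot : a - b * t = c * t ^ 2 := by
    rw [ht_def]; field_simp; linear_combination a*hs2
  have hct : |c * t| ≤ b / 4 := by
    have : c * t = 2 * (a * c) / (b + s) := by rw [ht_def]; ring
    rw [this, abs_div, abs_of_pos hbs, div_le_iff₀ hbs]
    have : |2 * (a * c)| = 2 * |a * c| := by rw [abs_mul]; simp [abs_of_nonneg]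
    rw [this]; nlinarith [abs_nonneg (a*c)]
  have heq2 : t - a / b = -(4 * a ^ 2 * c) / (b * (b + s) ^ 2) := by
    rw [ht_def]; field_simp; linear_combination (-a)*hs2
  refine ⟨t, ⟨hroot, hct⟩, ?_, ?_⟩
  · rw [heq2, abs_div, abs_neg, abs_of_pos (by positivity : (0:ℝ) < b * (b + s) ^ 2),
      div_le_div_iff₀ (by positivity) (by positivity)]
    have h1 : |4 * a ^ 2 * c| = 4 * a ^ 2 * |c| := by
      rw [abs_mul]; simp [abs_of_nonneg, sq_nonneg, abs_mul, sq_abs]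
    rw [h1]
    nlinarith [mul_nonneg (mul_nonneg (sq_nonneg a) (abs_nonneg c)) (show (0:ℝ) ≤ 4*(b*(b+s)^2) - b^3 by nlinarith)]
  · rintro t' ⟨hroot', hct'⟩
    have hfac : (t' - t) * (b + c * (t + t')) = 0 := by linear_combination hroot - hroot'
    have hct1 := abs_le.1 hct
    have hct2 := abs_le.1 hct'
    have hne : b + c * (t + t') ≠ 0 := by
      intro h0; nlinarith
    rcases mul_eq_zero.1 hfac with h1 | h1
    · linarith [sub_eq_zero.1 h1]
    · exact absurd h1 hne
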